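/- Let A ∈ ℝ^{n×d} of rank k with thin SVD A = U_A Σ_A V_Aᵀ, and let W ∈ ℝ^{r×n} be such that: W U_A has rank k, ‖(W U_A)⁺‖₂ ≤ 1/(1 − √(k/r)), and ‖W E‖_F ≤ ‖E‖_F where E = A X_opt − B with X_opt = A⁺B. Then the coreset solution X̃_opt = (W A)⁺ W B satisfies ‖A X̃_opt − B‖_F² ≤ (1 + 1/(1 − √(k/r))²)·‖A X_opt − B‖_F². -/

import Mathlib

open Matrix

noncomputable def frobSq {m n : ℕ} (M : Matrix (Fin m) (Fin n) ℝ) : ℝ :=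
  ∑ i, ∑ j, (M i j) ^ 2

noncomputable def spec {m n : ℕ} (M : Matrix (Fin m) (Fin n) ℝ) : ℝ :=
  ‖LinearMap.toContinuousLinearMap (Matrix.toEuclideanLin M)‖

def IsPinv {m n : ℕ} (A : Matrix (Fin m) (Fin n) ℝ) (P : Matrix (Fin n) (Fin m) ℝ) : Prop :=
  A * P * A = A ∧ P * A * P = P ∧ (A * P)ᵀ = A * P ∧ (P * A)ᵀ = P * A

lemma pinv_unique {m n : ℕ} {M : Matrix (Fin m) (Fin n) ℝ} {P Q : Matrix (Fin n) (Fin m) ℝ}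
    (hP : IsPinv M P) (hQ : IsPinv M Q) : P = Q := by
  obtain ⟨p1, p2, p3, p4⟩ := hP
  obtain ⟨q1, q2, q3, q4⟩ := hQ
  have hMP : M * P = M * Q := by
    calc M * P = (M * Q * M) * P := by rw [q1]
    _ = (M * Q) * (M * P) := by simp only [Matrix.mul_assoc]
    _ = (M * Q)ᵀ * (M * P)ᵀ := by rw [q3, p3]
    _ = ((M * P) * (M * Q))ᵀ := by simp only [transpose_mul, Matrix.mul_assoc]
    _ = (M * P * M * Q)ᵀ := by simp only [Matrix.mul_assoc]
    _ = (M * Q)ᵀ := by rw [p1]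
    _ = M * Q := q3
  have hPM : P * M = Q * M := by
    calc P * M = P * (M * Q * M) := by rw [q1]
    _ = (P * M) * (Q * M) := by simp only [Matrix.mul_assoc]
    _ = (P * M)ᵀ * (Q * M)ᵀ := by rw [q4, p4]
    _ = ((Q * M) * (P * M))ᵀ := by simp only [transpose_mul, Matrix.mul_assoc]
    _ = (Q * (M * P * M))ᵀ := by simp only [Matrix.mul_assoc]
    _ = (Q * M)ᵀ := by rw [p1]
    _ = Q * M := q4
  calc P = P * M * P := p2.symm
  _ = P * M * Q := by rw [Matrix.mul_assoc, hMP, ← Matrix.mul_assoc]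
  _ = Q * M * Q := by rw [hPM]
  _ = Q := q2

lemma pinv_left_inv {r k : ℕ} {M : Matrix (Fin r) (Fin k) ℝ} {P : Matrix (Fin k) (Fin r) ℝ}
    (hP : IsPinv M P) (hrank : M.rank = k) : P * M = 1 := by
  obtain ⟨p1, p2, p3, p4⟩ := hP
  have hidem : (P * M) * (P * M) = P * M := by
    calc (P * M) * (P * M) = P * (M * P * M) := by simp only [Matrix.mul_assoc]
    _ = P * M := by rw [p1]
  have hrk : (P * M).rank = k := by
    refine le_antisymm (le_trans (Matrix.rank_mul_le_right P M) hrank.le) ?_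
    have h2 : M.rank ≤ (P * M).rank := by
      conv_lhs => rw [← p1]
      calc (M * P * M).rank = (M * (P * M)).rank := by rw [Matrix.mul_assoc]
      _ ≤ (P * M).rank := Matrix.rank_mul_le_right M (P * M)
    exact le_trans (le_of_eq hrank.symm) h2
  have hunit : IsUnit (P * M) := by
    rw [← Matrix.mulVec_surjective_iff_isUnit]
    have hrange : LinearMap.range (P * M).mulVecLin = ⊤ := by
      apply Submodule.eq_top_of_finrank_eq
      rw [← Matrix.rank, hrk]; simp
    intro y
    exact (LinearMap.range_eq_top.mp hrange) y
  have hinv : (P * M)⁻¹ * (P * M) = 1 :=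
    Matrix.nonsing_inv_mul _ ((Matrix.isUnit_iff_isUnit_det _).mp hunit)
  calc P * M = ((P * M)⁻¹ * (P * M)) * (P * M) := by rw [hinv, Matrix.one_mul]
  _ = (P * M)⁻¹ * ((P * M) * (P * M)) := by rw [Matrix.mul_assoc]
  _ = (P * M)⁻¹ * (P * M) := by rw [hidem]
  _ = 1 := hinv

lemma frobSq_nonneg {m n : ℕ} (M : Matrix (Fin m) (Fin n) ℝ) : 0 ≤ frobSq M :=
  Finset.sum_nonneg fun _ _ => Finset.sum_nonneg fun _ _ => sq_nonneg _

lemma inner_sum_eq_zero {m n : ℕ} {X : Matrix (Fin m) (Fin n) ℝ} {Y : Matrix (Fin m) (Fin n) ℝ}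
    (h : Xᵀ * Y = 0) : ∑ i, ∑ j, X i j * Y i j = 0 := by
  have hd : ∀ j, (Xᵀ * Y) j j = 0 := fun j => by rw [h]; rfl
  have h2 : ∑ j, ∑ i, X i j * Y i j = 0 := by
    refine Finset.sum_eq_zero fun j _ => ?_
    simpa [Matrix.mul_apply, transpose_apply] using hd j
  rw [Finset.sum_comm] at h2
  exact h2

lemma frobSq_add_of_orth {m n : ℕ} {X Y : Matrix (Fin m) (Fin n) ℝ}
    (h : Xᵀ * Y = 0) : frobSq (X + Y) = frobSq X + frobSq Y := by
  have hz := inner_sum_eq_zero h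
  simp only [frobSq, Matrix.add_apply]
  have he : ∀ i j, (X i j + Y i j)^2 = X i j ^2 + Y i j ^2 + 2 * (X i j * Y i j) := by
    intro i j; ring
  simp only [he, Finset.sum_add_distrib, ← Finset.mul_sum]
  rw [hz]
  ring

lemma frobSq_neg {m n : ℕ} (M : Matrix (Fin m) (Fin n) ℝ) : frobSq (-M) = frobSq M := by
  simp [frobSq]

lemma frobSq_eq_trace {m n : ℕ} (N : Matrix (Fin m) (Fin n) ℝ) :
    frobSq N = (Nᵀ * N).trace := by
  simp only [frobSq, Matrix.trace, Matrix.diag, Matrix.mul_apply, transpose_apply]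
  rw [Finset.sum_comm]
  simp [sq]

lemma frobSq_unitary_mul {n k p : ℕ} {U : Matrix (Fin n) (Fin k) ℝ} (hU : Uᵀ * U = 1)
    (M : Matrix (Fin k) (Fin p) ℝ) : frobSq (U * M) = frobSq M := by
  rw [frobSq_eq_trace, frobSq_eq_trace]
  have h : (U * M)ᵀ * (U * M) = Mᵀ * M := by
    calc (U * M)ᵀ * (U * M) = Mᵀ * ((Uᵀ * U) * M) := by
          simp only [transpose_mul, Matrix.mul_assoc]
    _ = Mᵀ * M := by rw [hU, Matrix.one_mul]
  rw [h]

lemma frobSq_mul_le_spec {m n p : ℕ} (M : Matrix (Fin m) (Fin n) ℝ)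
    (N : Matrix (Fin n) (Fin p) ℝ) :
    frobSq (M * N) ≤ (spec M) ^ 2 * frobSq N := by
  set L := LinearMap.toContinuousLinearMap (Matrix.toEuclideanLin M) with hL
  have hspec : spec M = ‖L‖ := rfl
  have hcol : ∀ j : Fin p, ∑ i, ((M * N) i j) ^ 2 ≤ ‖L‖ ^ 2 * ∑ i, (N i j) ^ 2 := by
    intro j
    set v : EuclideanSpace ℝ (Fin n) := (WithLp.equiv 2 (Fin n → ℝ)).symm (fun i => N i j) with hv
    have hnv : ‖v‖ ^ 2 = ∑ i, (N i j) ^ 2 := by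
      rw [EuclideanSpace.norm_eq, Real.sq_sqrt]
      · simp [hv, PiLp.toLp_apply, sq_abs]
      · positivity
    have hLv : L v = (WithLp.equiv 2 (Fin m → ℝ)).symm (M *ᵥ fun i => N i j) := by
      simp [hL, hv, LinearMap.coe_toContinuousLinearMap', Matrix.toEuclideanLin_apply]
    have hnLv : ‖L v‖ ^ 2 = ∑ i, ((M * N) i j) ^ 2 := by
      rw [hLv, EuclideanSpace.norm_eq, Real.sq_sqrt]
      · congr 1; ext i
        simp [PiLp.toLp_apply, sq_abs, Matrix.mul_apply, Matrix.mulVec, dotProduct]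
      · positivity
    calc ∑ i, ((M * N) i j) ^ 2 = ‖L v‖ ^ 2 := hnLv.symm
    _ ≤ (‖L‖ * ‖v‖) ^ 2 := by
        have := L.le_opNorm v
        exact pow_le_pow_left₀ (norm_nonneg _) this 2
    _ = ‖L‖ ^ 2 * ‖v‖ ^ 2 := by ring
    _ = ‖L‖ ^ 2 * ∑ i, (N i j) ^ 2 := by rw [hnv]
  have h1 : frobSq (M * N) = ∑ j, ∑ i, ((M * N) i j) ^ 2 := Finset.sum_comm
  rw [h1, hspec]
  have h2 : frobSq N = ∑ j, ∑ i, (N i j) ^ 2 := Finset.sum_comm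
  rw [h2, Finset.mul_sum]
  exact Finset.sum_le_sum fun j _ => hcol j

theorem frobenius_coreset_regression {n d ω r k : ℕ} (hr : k < r)
    (A : Matrix (Fin n) (Fin d) ℝ) (hkA : A.rank = k)
    (U : Matrix (Fin n) (Fin k) ℝ) (S : Matrix (Fin k) (Fin k) ℝ)
    (V : Matrix (Fin d) (Fin k) ℝ)
    (hSVD : A = U * S * Vᵀ) (hU : Uᵀ * U = 1) (hV : Vᵀ * V = 1)
    (hSdiag : S.IsDiag) (hSinv : IsUnit S.det)
    (B : Matrix (Fin n) (Fin ω) ℝ)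
    (Ap : Matrix (Fin d) (Fin n) ℝ) (hAp : IsPinv A Ap)
    (Xopt : Matrix (Fin d) (Fin ω) ℝ) (hXopt : Xopt = Ap * B)
    (E : Matrix (Fin n) (Fin ω) ℝ) (hE : E = A * Xopt - B)
    (W : Matrix (Fin r) (Fin n) ℝ) (hrank : (W * U).rank = k)
    (Pwu : Matrix (Fin k) (Fin r) ℝ) (hPwu : IsPinv (W * U) Pwu)
    (hPwuNorm : spec Pwu ≤ 1 / (1 - Real.sqrt ((k : ℝ) / r)))
    (hWE : Real.sqrt (frobSq (W * E)) ≤ Real.sqrt (frobSq E))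
    (Pwa : Matrix (Fin d) (Fin r) ℝ) (hPwa : IsPinv (W * A) Pwa)
    (Xt : Matrix (Fin d) (Fin ω) ℝ) (hXt : Xt = Pwa * (W * B)) :
    frobSq (A * Xt - B)
      ≤ (1 + 1 / (1 - Real.sqrt ((k : ℝ) / r)) ^ 2) * frobSq (A * Xopt - B) := by
  -- Basic invertibility facts for S
  have hS2 : S * S⁻¹ = 1 := Matrix.mul_nonsing_inv S hSinv
  have hS1 : S⁻¹ * S = 1 := Matrix.nonsing_inv_mul S hSinv
  -- Pwu is a left inverse of W * U
  have hK : Pwu * (W * U) = 1 := pinv_left_inv hPwu hrank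
  obtain ⟨w1, w2, w3, w4⟩ := hPwu
  -- The pseudoinverse of W * A is V * S⁻¹ * Pwu
  have hPelim : Pwa = V * S⁻¹ * Pwu := by
    refine pinv_unique hPwa ⟨?_, ?_, ?_, ?_⟩
    · -- (W*A) * (V*S⁻¹*Pwu) * (W*A) = W*A
      have hWA : W * A = W * U * S * Vᵀ := by rw [hSVD]; simp only [Matrix.mul_assoc]
      rw [hWA]
      calc W * U * S * Vᵀ * (V * S⁻¹ * Pwu) * (W * U * S * Vᵀ)
          = W * U * (S * (Vᵀ * V) * S⁻¹) * (Pwu * (W * U)) * (S * Vᵀ) := by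
            simp only [Matrix.mul_assoc]
      _ = W * U * S * Vᵀ := by
            rw [hV, Matrix.mul_one, hS2, hK, Matrix.mul_one]
            simp only [Matrix.mul_assoc, Matrix.one_mul]
    · have hWA : W * A = W * U * S * Vᵀ := by rw [hSVD]; simp only [Matrix.mul_assoc]
      rw [hWA]
      calc V * S⁻¹ * Pwu * (W * U * S * Vᵀ) * (V * S⁻¹ * Pwu)
          = V * S⁻¹ * (Pwu * (W * U)) * (S * (Vᵀ * V) * S⁻¹) * Pwu := by
            simp only [Matrix.mul_assoc]
      _ = V * S⁻¹ * Pwu := by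
            rw [hK, Matrix.mul_one, hV, Matrix.mul_one, hS2, Matrix.mul_one]
    · have hWA : W * A = W * U * S * Vᵀ := by rw [hSVD]; simp only [Matrix.mul_assoc]
      rw [hWA]
      have hMP : W * U * S * Vᵀ * (V * S⁻¹ * Pwu) = (W * U) * Pwu := by
        calc W * U * S * Vᵀ * (V * S⁻¹ * Pwu)
            = W * U * (S * (Vᵀ * V) * S⁻¹) * Pwu := by simp only [Matrix.mul_assoc]
        _ = (W * U) * Pwu := by rw [hV, Matrix.mul_one, hS2, Matrix.mul_one]
      rw [hMP]; exact w3
    · have hWA : W * A = W * U * S * Vᵀ := by rw [hSVD]; simp only [Matrix.mul_assoc]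
      rw [hWA]
      have hPM : V * S⁻¹ * Pwu * (W * U * S * Vᵀ) = V * Vᵀ := by
        calc V * S⁻¹ * Pwu * (W * U * S * Vᵀ)
            = V * (S⁻¹ * ((Pwu * (W * U)) * S)) * Vᵀ := by simp only [Matrix.mul_assoc]
        _ = V * Vᵀ := by rw [hK, Matrix.one_mul, hS1, Matrix.mul_one]
      rw [hPM, transpose_mul, transpose_transpose]
  -- Uᵀ * E = 0
  have hAE : Aᵀ * E = 0 := by
    obtain ⟨a1, a2, a3, a4⟩ := hAp
    have h1 : Aᵀ * (A * Ap) = Aᵀ := by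
      calc Aᵀ * (A * Ap) = Aᵀ * (A * Ap)ᵀ := by rw [a3]
      _ = (A * Ap * A)ᵀ := by simp only [transpose_mul, Matrix.mul_assoc]
      _ = Aᵀ := by rw [a1]
    rw [hE, hXopt]
    calc Aᵀ * (A * (Ap * B) - B) = (Aᵀ * (A * Ap)) * B - Aᵀ * B := by
          rw [Matrix.mul_sub]; simp only [Matrix.mul_assoc]
    _ = 0 := by rw [h1, sub_self]
  have hUE : Uᵀ * E = 0 := by
    have hST : IsUnit Sᵀ.det := by rwa [Matrix.det_transpose]
    have h1 : V * (Sᵀ * (Uᵀ * E)) = 0 := by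
      have : Aᵀ = V * (Sᵀ * Uᵀ) := by
        rw [hSVD]; simp only [transpose_mul, transpose_transpose, Matrix.mul_assoc]
      calc V * (Sᵀ * (Uᵀ * E)) = Aᵀ * E := by rw [this]; simp only [Matrix.mul_assoc]
      _ = 0 := hAE
    have h2 : Sᵀ * (Uᵀ * E) = 0 := by
      calc Sᵀ * (Uᵀ * E) = (Vᵀ * V) * (Sᵀ * (Uᵀ * E)) := by rw [hV, Matrix.one_mul]
      _ = Vᵀ * (V * (Sᵀ * (Uᵀ * E))) := by rw [Matrix.mul_assoc]
      _ = 0 := by rw [h1, Matrix.mul_zero]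
    calc Uᵀ * E = ((Sᵀ)⁻¹ * Sᵀ) * (Uᵀ * E) := by
          rw [Matrix.nonsing_inv_mul _ hST, Matrix.one_mul]
    _ = (Sᵀ)⁻¹ * (Sᵀ * (Uᵀ * E)) := by rw [Matrix.mul_assoc]
    _ = 0 := by rw [h2, Matrix.mul_zero]
  -- Key identity: A * Xt - B = -(U * (Pwu * (W * E))) + E
  have hkey : A * Xt - B = -(U * (Pwu * (W * E))) + E := by
    have hAXt : A * Xt = U * (Pwu * (W * B)) := by
      rw [hXt, hPelim, hSVD]
      calc U * S * Vᵀ * (V * S⁻¹ * Pwu * (W * B))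
          = U * (S * (Vᵀ * V) * S⁻¹) * (Pwu * (W * B)) := by simp only [Matrix.mul_assoc]
      _ = U * (Pwu * (W * B)) := by rw [hV, Matrix.mul_one, hS2, Matrix.mul_one]
    have hWB : W * B = W * (A * Xopt) - W * E := by rw [hE, Matrix.mul_sub]; abel
    have hproj : U * (Pwu * (W * (A * Xopt))) = A * Xopt := by
      rw [hSVD]
      calc U * (Pwu * (W * (U * S * Vᵀ * Xopt)))
          = U * ((Pwu * (W * U)) * (S * (Vᵀ * Xopt))) := by simp only [Matrix.mul_assoc]
      _ = U * S * Vᵀ * Xopt := by rw [hK, Matrix.one_mul]; simp only [Matrix.mul_assoc]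
    rw [hAXt, hWB, Matrix.mul_sub, Matrix.mul_sub, hproj, hE]
    abel
  -- Pythagorean decomposition
  have horth : (-(U * (Pwu * (W * E))))ᵀ * E = 0 := by
    rw [transpose_neg, Matrix.neg_mul]
    simp only [transpose_mul, Matrix.mul_assoc, hUE, Matrix.mul_zero, neg_zero]
  have hdecomp : frobSq (A * Xt - B) = frobSq (Pwu * (W * E)) + frobSq E := by
    rw [hkey, frobSq_add_of_orth horth, frobSq_neg, frobSq_unitary_mul hU]
  -- Numeric bounds
  have hr0 : (0:ℝ) < r := by
    have : 0 < r := Nat.lt_of_le_of_lt (Nat.zero_le k) hr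
    exact_mod_cast this
  have hlt1 : Real.sqrt ((k:ℝ)/r) < 1 := by
    rw [show (1:ℝ) = Real.sqrt 1 by simp]
    apply Real.sqrt_lt_sqrt (by positivity)
    rw [div_lt_one hr0]
    exact_mod_cast hr
  have hden : 0 < 1 - Real.sqrt ((k:ℝ)/r) := by linarith
  have hc : 0 < 1 / (1 - Real.sqrt ((k:ℝ)/r)) := by positivity
  have hWEle : frobSq (W * E) ≤ frobSq E := by
    have h1 : Real.sqrt (frobSq (W * E)) ^ 2 ≤ Real.sqrt (frobSq E) ^ 2 :=
      pow_le_pow_left₀ (Real.sqrt_nonneg _) hWE 2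
    rwa [Real.sq_sqrt (frobSq_nonneg _), Real.sq_sqrt (frobSq_nonneg _)] at h1
  have hbound : frobSq (Pwu * (W * E)) ≤ (1 / (1 - Real.sqrt ((k:ℝ)/r)))^2 * frobSq E := by
    calc frobSq (Pwu * (W * E)) ≤ (spec Pwu)^2 * frobSq (W * E) := frobSq_mul_le_spec _ _
    _ ≤ (1 / (1 - Real.sqrt ((k:ℝ)/r)))^2 * frobSq E := by
        apply mul_le_mul
        · exact pow_le_pow_left₀ (norm_nonneg _) hPwuNorm 2
        · exact hWEle
        · exact frobSq_nonneg _
        · positivity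
  have hfinal : frobSq (A * Xt - B) ≤ (1 + (1 / (1 - Real.sqrt ((k:ℝ)/r)))^2) * frobSq E := by
    rw [hdecomp]; nlinarith [frobSq_nonneg E]
  calc frobSq (A * Xt - B) ≤ (1 + (1 / (1 - Real.sqrt ((k:ℝ)/r)))^2) * frobSq E := hfinal
  _ = (1 + 1 / (1 - Real.sqrt ((k:ℝ)/r))^2) * frobSq (A * Xopt - B) := by
      rw [← hE, one_div, one_div, inv_pow]
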